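/- arXiv:2307.03628 — 2 statements merged into one kernel-verified Lean document; each statement's English description precedes it below -/
import Mathlib

section
/- Let s > 0 and let r₁ ≤ r₂ ≤ r₃ be real numbers with rᵢ < s/2 for i = 1,2,3 and r₁ + r₂ + r₃ < s − 1/2. Then there exist real numbers q₁, q₂, q₃ and τ₁, τ₂, τ₃ such that: qᵢ ≥ 2 for i = 1,2,3; rᵢ + 1/2 ≤ τᵢ/2 + 1/qᵢ for i = 1,2,3; rᵢ ≤ τᵢ/2 ≤ s/2 for i = 1,2,3; 1/q₁ + 1/q₂ + 1/q₃ = 1; and max(τ₁,0) + max(τ₂,0) + max(τ₃,0) < 2s. -/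
set_option maxHeartbeats 1000000


/-- Exponent selection for the upper bound on the nonlinear functional (Lemma 2.1). -/
theorem exponent_selection
    (s r₁ r₂ r₃ : ℝ) (hs : 0 < s)
    (h12 : r₁ ≤ r₂) (h23 : r₂ ≤ r₃)
    (hr₁ : r₁ < s / 2) (hr₂ : r₂ < s / 2) (hr₃ : r₃ < s / 2)
    (hsum : r₁ + r₂ + r₃ < s - 1 / 2) :
    ∃ q₁ q₂ q₃ τ₁ τ₂ τ₃ : ℝ,
      2 ≤ q₁ ∧ 2 ≤ q₂ ∧ 2 ≤ q₃ ∧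
      r₁ + 1 / 2 ≤ τ₁ / 2 + 1 / q₁ ∧
      r₂ + 1 / 2 ≤ τ₂ / 2 + 1 / q₂ ∧
      r₃ + 1 / 2 ≤ τ₃ / 2 + 1 / q₃ ∧
      r₁ ≤ τ₁ / 2 ∧ τ₁ / 2 ≤ s / 2 ∧
      r₂ ≤ τ₂ / 2 ∧ τ₂ / 2 ≤ s / 2 ∧
      r₃ ≤ τ₃ / 2 ∧ τ₃ / 2 ≤ s / 2 ∧
      1 / q₁ + 1 / q₂ + 1 / q₃ = 1 ∧
      max τ₁ 0 + max τ₂ 0 + max τ₃ 0 < 2 * s := by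
  obtain ⟨d₁, hd₁⟩ : ∃ x : ℝ, x = s / 2 - r₁ := ⟨_, rfl⟩
  obtain ⟨d₂, hd₂⟩ : ∃ x : ℝ, x = s / 2 - r₂ := ⟨_, rfl⟩
  obtain ⟨d₃, hd₃⟩ : ∃ x : ℝ, x = s / 2 - r₃ := ⟨_, rfl⟩
  obtain ⟨D, hD⟩ : ∃ x : ℝ, x = d₁ + d₂ + d₃ := ⟨_, rfl⟩
  have hd₁0 : 0 < d₁ := by rw [hd₁]; linarith
  have hd₂0 : 0 < d₂ := by rw [hd₂]; linarith
  have hd₃0 : 0 < d₃ := by rw [hd₃]; linarith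
  have hD0 : 0 < D := by rw [hD]; linarith
  have hDne : D ≠ 0 := ne_of_gt hD0
  have hDhalf : 1 / 2 < D := by rw [hD, hd₁, hd₂, hd₃]; linarith
  obtain ⟨a₁, ha₁⟩ : ∃ x : ℝ, x = 1 / 2 - d₁ / (2 * D) := ⟨_, rfl⟩
  obtain ⟨a₂, ha₂⟩ : ∃ x : ℝ, x = 1 / 2 - d₂ / (2 * D) := ⟨_, rfl⟩
  obtain ⟨a₃, ha₃⟩ : ∃ x : ℝ, x = 1 / 2 - d₃ / (2 * D) := ⟨_, rfl⟩
  have key : ∀ d : ℝ, 0 < d → d < D → 0 < 1 / 2 - d / (2 * D) := by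
    intro d hd hdD
    rw [sub_pos, div_lt_iff₀ (by linarith : (0:ℝ) < 2 * D)]
    linarith
  have ha₁0 : 0 < a₁ := by rw [ha₁]; exact key d₁ hd₁0 (by rw [hD]; linarith)
  have ha₂0 : 0 < a₂ := by rw [ha₂]; exact key d₂ hd₂0 (by rw [hD]; linarith)
  have ha₃0 : 0 < a₃ := by rw [ha₃]; exact key d₃ hd₃0 (by rw [hD]; linarith)
  have hq : ∀ d : ℝ, 0 < d → 0 < 1 / 2 - d / (2 * D) → 2 ≤ 1 / (1 / 2 - d / (2 * D)) := by
    intro d hd hpos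
    rw [le_div_iff₀ hpos]
    have : 0 < d / (2 * D) := by positivity
    linarith
  have hdiv : ∀ d : ℝ, d / (2 * D) = d / D / 2 := by
    intro d; rw [div_div]; ring_nf
  refine ⟨1 / a₁, 1 / a₂, 1 / a₃, 2 * r₁ + d₁ / D, 2 * r₂ + d₂ / D, 2 * r₃ + d₃ / D,
    ?_, ?_, ?_, ?_, ?_, ?_, ?_, ?_, ?_, ?_, ?_, ?_, ?_, ?_⟩
  · rw [ha₁]; exact hq d₁ hd₁0 (ha₁ ▸ ha₁0)
  · rw [ha₂]; exact hq d₂ hd₂0 (ha₂ ▸ ha₂0)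
  · rw [ha₃]; exact hq d₃ hd₃0 (ha₃ ▸ ha₃0)
  · rw [one_div_one_div, ha₁, hdiv]; linarith [hdiv d₁]
  · rw [one_div_one_div, ha₂, hdiv]; linarith [hdiv d₂]
  · rw [one_div_one_div, ha₃, hdiv]; linarith [hdiv d₃]
  · have : 0 < d₁ / D := by positivity
    linarith
  · have h : d₁ / D ≤ 2 * d₁ := by
      rw [div_le_iff₀ hD0]; nlinarith
    rw [hd₁] at h ⊢; linarith
  · have : 0 < d₂ / D := by positivity
    linarith
  · have h : d₂ / D ≤ 2 * d₂ := by
      rw [div_le_iff₀ hD0]; nlinarith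
    rw [hd₂] at h ⊢; linarith
  · have : 0 < d₃ / D := by positivity
    linarith
  · have h : d₃ / D ≤ 2 * d₃ := by
      rw [div_le_iff₀ hD0]; nlinarith
    rw [hd₃] at h ⊢; linarith
  · rw [one_div_one_div, one_div_one_div, one_div_one_div, ha₁, ha₂, ha₃]
    have h : d₁ / (2 * D) + d₂ / (2 * D) + d₃ / (2 * D) = 1 / 2 := by
      rw [← add_div, ← add_div, ← hD, div_eq_iff (by positivity : (2:ℝ) * D ≠ 0)]
      ring
    linarith
  · have hτ₁ : 2 * r₁ + d₁ / D < s := by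
      have h : d₁ / D < 2 * d₁ := by rw [div_lt_iff₀ hD0]; nlinarith
      rw [hd₁] at h ⊢; linarith
    have hτ₂ : 2 * r₂ + d₂ / D < s := by
      have h : d₂ / D < 2 * d₂ := by rw [div_lt_iff₀ hD0]; nlinarith
      rw [hd₂] at h ⊢; linarith
    have hτ₃ : 2 * r₃ + d₃ / D < s := by
      have h : d₃ / D < 2 * d₃ := by rw [div_lt_iff₀ hD0]; nlinarith
      rw [hd₃] at h ⊢; linarith
    have hsum' : (2 * r₁ + d₁ / D) + (2 * r₂ + d₂ / D) + (2 * r₃ + d₃ / D) < 2 * s := by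
      have h : d₁ / D + d₂ / D + d₃ / D = 1 := by
        rw [← add_div, ← add_div, hD, div_self (by rw [hD] at hDne; exact hDne)]
      linarith
    rcases max_cases (2 * r₁ + d₁ / D) 0 with ⟨e₁, f₁⟩ | ⟨e₁, f₁⟩ <;>
    rcases max_cases (2 * r₂ + d₂ / D) 0 with ⟨e₂, f₂⟩ | ⟨e₂, f₂⟩ <;>
    rcases max_cases (2 * r₃ + d₃ / D) 0 with ⟨e₃, f₃⟩ | ⟨e₃, f₃⟩ <;>
    rw [e₁, e₂, e₃] <;> linarith
end

section
/- Let f, g, h be Schwartz functions on ℝ, let a, b, c ≥ 0 be real numbers and let δ > 0. Then there exists a constant C > 0 such that for all t ∈ (0, 1], ∫_{|η| > δ/(2t)} (F ∗ G)(η) · ⟨η⟩^{c} · |ĥ(η)| dη ≤ C t, where F(x) = ⟨x⟩^{a} |f̂(x)|, G(x) = ⟨x⟩^{b} |ĝ(x)|, (F ∗ G)(η) = ∫_ℝ F(η − y) G(y) dy, f̂, ĝ, ĥ denote Fourier transforms, and ⟨x⟩ = (1 + x²)^{1/2}. -/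
open MeasureTheory

/-- The Japanese bracket `⟨x⟩ = (1 + x²)^{1/2}`. -/
noncomputable def jb (x : ℝ) : ℝ := Real.sqrt (1 + x ^ 2)

lemma one_le_jb (x : ℝ) : 1 ≤ jb x := by
  have := Real.sqrt_le_sqrt (show (1:ℝ) ≤ 1 + x ^ 2 by nlinarith [sq_nonneg x])
  simpa [jb] using this

lemma jb_pos (x : ℝ) : 0 < jb x := lt_of_lt_of_le one_pos (one_le_jb x)

lemma abs_le_jb (x : ℝ) : |x| ≤ jb x := by
  rw [jb, show |x| = Real.sqrt (x ^ 2) by rw [Real.sqrt_sq_eq_abs]]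
  exact Real.sqrt_le_sqrt (by nlinarith)

lemma jb_le (x : ℝ) : jb x ≤ 1 + |x| := by
  rw [jb]
  rw [show (1 + |x|) = Real.sqrt ((1 + |x|) ^ 2) from
    (Real.sqrt_sq (by positivity)).symm]
  exact Real.sqrt_le_sqrt (by nlinarith [abs_nonneg x, sq_abs x])

lemma jb_sq (x : ℝ) : jb x ^ (2:ℕ) = 1 + x ^ 2 :=
  Real.sq_sqrt (by positivity)

/-- Main decay estimate for Schwartz functions against `jb x ^ r`. -/
lemma schwartz_decay_bound (ψ : SchwartzMap ℝ ℂ) (r : ℝ) (hr : 0 ≤ r) :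
    ∃ C, 0 ≤ C ∧ ∀ x : ℝ, jb x ^ r * ‖ψ x‖ ≤ C * (1 + x ^ 2)⁻¹ := by
  set n : ℕ := ⌈r⌉₊ + 2 with hn
  refine ⟨2 ^ n * (Finset.Iic ((n, 0) : ℕ × ℕ)).sup
      (fun m => SchwartzMap.seminorm ℝ m.1 m.2) ψ, by positivity, fun x => ?_⟩
  have hpos : (0:ℝ) < 1 + x ^ 2 := by positivity
  rw [show (2 ^ n * (Finset.Iic ((n, 0) : ℕ × ℕ)).sup
      (fun m => SchwartzMap.seminorm ℝ m.1 m.2) ψ) * (1 + x ^ 2)⁻¹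
      = (2 ^ n * (Finset.Iic ((n, 0) : ℕ × ℕ)).sup
      (fun m => SchwartzMap.seminorm ℝ m.1 m.2) ψ) / (1 + x ^ 2) by ring,
    le_div_iff₀ hpos]
  calc jb x ^ r * ‖ψ x‖ * (1 + x ^ 2)
      = (jb x ^ r * (1 + x ^ 2)) * ‖ψ x‖ := by ring
    _ ≤ (1 + ‖x‖) ^ n * ‖ψ x‖ := by
        apply mul_le_mul_of_nonneg_right _ (norm_nonneg _)
        have h1 : jb x ^ r ≤ jb x ^ (⌈r⌉₊ : ℝ) :=
          Real.rpow_le_rpow_of_exponent_le (one_le_jb x) (Nat.le_ceil r)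
        have h2 : jb x ^ (⌈r⌉₊ : ℝ) = jb x ^ (⌈r⌉₊ : ℕ) := Real.rpow_natCast _ _
        have h3 : jb x ^ r * (1 + x ^ 2) ≤ jb x ^ (⌈r⌉₊ : ℕ) * jb x ^ (2:ℕ) := by
          rw [jb_sq]
          exact mul_le_mul_of_nonneg_right (h2 ▸ h1) (le_of_lt hpos)
        refine le_trans h3 ?_
        rw [← pow_add]
        rw [Real.norm_eq_abs]
        exact pow_le_pow_left₀ (le_of_lt (jb_pos x)) (jb_le x) n
    _ ≤ ‖ψ x‖ * (1 + ‖x‖) ^ n := by ring_nf; exact le_refl _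
    _ ≤ 2 ^ n * (Finset.Iic ((n, 0) : ℕ × ℕ)).sup
          (fun m => SchwartzMap.seminorm ℝ m.1 m.2) ψ := by
        have := SchwartzMap.one_add_le_sup_seminorm_apply (𝕜 := ℝ)
          (m := ((n, 0) : ℕ × ℕ)) (k := n) (n := 0) le_rfl le_rfl ψ x
        rwa [norm_iteratedFDeriv_zero, mul_comm] at this

lemma schwartz_decay_bdd (ψ : SchwartzMap ℝ ℂ) (r : ℝ) (hr : 0 ≤ r) :
    ∃ C, 0 ≤ C ∧ ∀ x : ℝ, jb x ^ r * ‖ψ x‖ ≤ C := by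
  obtain ⟨C, hC0, hC⟩ := schwartz_decay_bound ψ r hr
  refine ⟨C, hC0, fun x => le_trans (hC x) ?_⟩
  have hpos : (0:ℝ) < 1 + x ^ 2 := by positivity
  have : (1 + x ^ 2)⁻¹ ≤ 1 := by
    rw [inv_le_one_iff₀]; right; nlinarith
  nlinarith

lemma jb_rpow_continuous (r : ℝ) (hr : 0 ≤ r) :
    Continuous (fun x : ℝ => jb x ^ r) := by
  apply Continuous.rpow_const
  · exact (continuous_const.add (continuous_pow 2)).sqrt
  · intro x; exact Or.inr hr

lemma schwartz_decay_integrable (ψ : SchwartzMap ℝ ℂ) (r : ℝ) (hr : 0 ≤ r) :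
    Integrable (fun x : ℝ => jb x ^ r * ‖ψ x‖) := by
  obtain ⟨C, hC0, hC⟩ := schwartz_decay_bound ψ r hr
  apply Integrable.mono' ((integrable_inv_one_add_sq).const_mul C)
  · exact (((jb_rpow_continuous r hr).mul ψ.continuous.norm)).aestronglyMeasurable
  · filter_upwards with x
    rw [Real.norm_eq_abs,
      abs_of_nonneg (mul_nonneg (Real.rpow_nonneg (jb_pos x).le r) (norm_nonneg _))]
    simpa using hC x

/-- Realification: a real Schwartz map gives a complex one. -/
noncomputable def toC (f : SchwartzMap ℝ ℝ) : SchwartzMap ℝ ℂ :=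
  SchwartzMap.bilinLeftCLM (ContinuousLinearMap.lsmul ℝ ℝ : ℝ →L[ℝ] ℂ →L[ℝ] ℂ)
    (Function.HasTemperateGrowth.const (1:ℂ)) f

lemma toC_apply (f : SchwartzMap ℝ ℝ) (x : ℝ) : toC f x = (f x : ℂ) := by
  show (f x) • (1:ℂ) = (f x : ℂ)
  simp [Complex.real_smul]

/-- The Fourier transform of (the complexification of) a real Schwartz map, as a Schwartz map. -/
noncomputable def FT (f : SchwartzMap ℝ ℝ) : SchwartzMap ℝ ℂ :=
  SchwartzMap.fourierTransformCLM ℝ (toC f)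

lemma FT_apply (f : SchwartzMap ℝ ℝ) (ξ : ℝ) :
    FT f ξ = FourierTransform.fourier (fun x => (f x : ℂ)) ξ := by
  have : (⇑(toC f)) = (fun x => (f x : ℂ)) := funext (toC_apply f)
  rw [FT, SchwartzMap.fourierTransformCLM_apply, SchwartzMap.fourier_coe, this]

/-- High-frequency tail bound (integral over domain C in the proof of Lemma 2.2). -/
theorem high_frequency_tail_bound
    (f g h : SchwartzMap ℝ ℝ) (a b c : ℝ) (ha : 0 ≤ a) (hb : 0 ≤ b) (hc : 0 ≤ c)
    (δ : ℝ) (hδ : 0 < δ) :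
    ∃ C > (0 : ℝ), ∀ t ∈ Set.Ioc (0 : ℝ) 1,
      (∫ η in {η : ℝ | δ / (2 * t) < |η|},
        (∫ y : ℝ,
          (jb (η - y) ^ a * ‖FourierTransform.fourier (fun x => (f x : ℂ)) (η - y)‖) *
            (jb y ^ b * ‖FourierTransform.fourier (fun x => (g x : ℂ)) y‖)) *
          (jb η ^ c * ‖FourierTransform.fourier (fun x => (h x : ℂ)) η‖))
        ≤ C * t := by
  -- Bounds for the three Fourier transforms
  obtain ⟨Cf, hCf0, hCf⟩ := schwartz_decay_bdd (FT f) a ha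
  set G : ℝ → ℝ := fun y => jb y ^ b * ‖FT g y‖ with hGdef
  have hGint : Integrable G := schwartz_decay_integrable (FT g) b hb
  have hGnn : ∀ y, 0 ≤ G y := fun y => by
    apply mul_nonneg (Real.rpow_nonneg (le_of_lt (jb_pos y)) b) (norm_nonneg _)
  set Ig : ℝ := ∫ y, G y with hIg
  have hIg0 : 0 ≤ Ig := integral_nonneg hGnn
  set H : ℝ → ℝ := fun η => jb η ^ (c + 1) * ‖FT h η‖ with hHdef
  have hHint : Integrable H := schwartz_decay_integrable (FT h) (c + 1) (by linarith)
  have hHnn : ∀ η, 0 ≤ H η := fun η => by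
    apply mul_nonneg (Real.rpow_nonneg (le_of_lt (jb_pos η)) _) (norm_nonneg _)
  set K : ℝ := ∫ η, H η with hK
  have hK0 : 0 ≤ K := integral_nonneg hHnn
  set D : ℝ := Cf * Ig * (2 / δ) with hD
  have hD0 : 0 ≤ D := by positivity
  refine ⟨max 1 (D * K), lt_of_lt_of_le one_pos (le_max_left _ _), fun t ht => ?_⟩
  obtain ⟨ht0, ht1⟩ := ht
  -- rewrite fourier integrals as Schwartz map applications
  have hre : ∀ (φ : SchwartzMap ℝ ℝ) (ξ : ℝ),
      ‖FourierTransform.fourier (fun x => (φ x : ℂ)) ξ‖ = ‖FT φ ξ‖ := fun φ ξ => by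
    rw [FT_apply]
  -- the inner integral is bounded by Cf * Ig
  have hinner_le : ∀ η : ℝ,
      (∫ y : ℝ, (jb (η - y) ^ a * ‖FourierTransform.fourier (fun x => (f x : ℂ)) (η - y)‖) *
        (jb y ^ b * ‖FourierTransform.fourier (fun x => (g x : ℂ)) y‖)) ≤ Cf * Ig := by
    intro η
    have := integral_mono_of_nonneg (f := fun y : ℝ =>
        (jb (η - y) ^ a * ‖FourierTransform.fourier (fun x => (f x : ℂ)) (η - y)‖) *
          (jb y ^ b * ‖FourierTransform.fourier (fun x => (g x : ℂ)) y‖))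
        (g := fun y => Cf * G y)
        (Filter.Eventually.of_forall (fun y => by
          apply mul_nonneg <;>
            exact mul_nonneg (Real.rpow_nonneg (le_of_lt (jb_pos _)) _) (norm_nonneg _)))
        (hGint.const_mul Cf)
        (Filter.Eventually.of_forall (fun y => by
          simp only [hre f, hre g]
          exact mul_le_mul_of_nonneg_right (hCf (η - y))
            (mul_nonneg (Real.rpow_nonneg (jb_pos y).le b) (norm_nonneg _))))
    rwa [integral_const_mul] at this
  have hinner_nn : ∀ η : ℝ,
      0 ≤ (∫ y : ℝ, (jb (η - y) ^ a * ‖FourierTransform.fourier (fun x => (f x : ℂ)) (η - y)‖) *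
        (jb y ^ b * ‖FourierTransform.fourier (fun x => (g x : ℂ)) y‖)) := by
    intro η
    apply integral_nonneg
    intro y
    apply mul_nonneg <;>
      exact mul_nonneg (Real.rpow_nonneg (le_of_lt (jb_pos _)) _) (norm_nonneg _)
  set S : Set ℝ := {η : ℝ | δ / (2 * t) < |η|} with hS
  have hSmeas : MeasurableSet S :=
    measurableSet_lt measurable_const continuous_abs.measurable
  -- pointwise bound on S
  have hpt : ∀ η ∈ S,
      (∫ y : ℝ, (jb (η - y) ^ a * ‖FourierTransform.fourier (fun x => (f x : ℂ)) (η - y)‖) *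
          (jb y ^ b * ‖FourierTransform.fourier (fun x => (g x : ℂ)) y‖)) *
        (jb η ^ c * ‖FourierTransform.fourier (fun x => (h x : ℂ)) η‖)
      ≤ D * t * H η := by
    intro η hη
    have hη' : δ / (2 * t) < |η| := hη
    have h2t : 0 < 2 * t := by linarith
    have h1 : 1 ≤ 2 * t / δ * jb η := by
      have : δ < 2 * t * |η| := by
        rw [div_lt_iff₀ h2t] at hη'
        linarith [hη']
      have h2 : δ ≤ 2 * t * jb η := le_trans (le_of_lt this)
        (by nlinarith [abs_le_jb η, abs_nonneg η])
      rw [div_mul_eq_mul_div, le_div_iff₀ hδ]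
      linarith
    have hhterm : jb η ^ c * ‖FourierTransform.fourier (fun x => (h x : ℂ)) η‖
        ≤ 2 * t / δ * H η := by
      simp only [hre h, hHdef]
      have : jb η ^ (c + 1) = jb η ^ c * jb η :=
        Real.rpow_add_one (ne_of_gt (jb_pos η)) c
      rw [this]
      calc jb η ^ c * ‖FT h η‖ = jb η ^ c * ‖FT h η‖ * 1 := by ring
        _ ≤ jb η ^ c * ‖FT h η‖ * (2 * t / δ * jb η) := by
            apply mul_le_mul_of_nonneg_left h1
            exact mul_nonneg (Real.rpow_nonneg (le_of_lt (jb_pos η)) c) (norm_nonneg _)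
        _ = 2 * t / δ * (jb η ^ c * jb η * ‖FT h η‖) := by ring
    calc _ ≤ (Cf * Ig) * (2 * t / δ * H η) := by
          apply mul_le_mul (hinner_le η) hhterm
          · apply mul_nonneg (Real.rpow_nonneg (le_of_lt (jb_pos η)) c) (norm_nonneg _)
          · positivity
      _ = D * t * H η := by rw [hD]; ring
  -- integrate the bound
  have hDtH_int : Integrable (fun η => D * t * H η) := hHint.const_mul _
  have step1 : (∫ η in S,
        (∫ y : ℝ, (jb (η - y) ^ a * ‖FourierTransform.fourier (fun x => (f x : ℂ)) (η - y)‖) *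
          (jb y ^ b * ‖FourierTransform.fourier (fun x => (g x : ℂ)) y‖)) *
          (jb η ^ c * ‖FourierTransform.fourier (fun x => (h x : ℂ)) η‖))
      ≤ ∫ η in S, D * t * H η := by
    apply integral_mono_of_nonneg
    · filter_upwards with η
      apply mul_nonneg (hinner_nn η)
      exact mul_nonneg (Real.rpow_nonneg (le_of_lt (jb_pos η)) c) (norm_nonneg _)
    · exact hDtH_int.restrict
    · filter_upwards [ae_restrict_mem hSmeas] with η hη
      exact hpt η hη
  have step2 : (∫ η in S, D * t * H η) ≤ ∫ η, D * t * H η := by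
    apply setIntegral_le_integral hDtH_int
    filter_upwards with η
    exact mul_nonneg (by positivity) (hHnn η)
  have step3 : (∫ η, D * t * H η) = D * t * K := by
    rw [integral_const_mul]
  have : D * t * K ≤ max 1 (D * K) * t := by
    have : D * K ≤ max 1 (D * K) := le_max_right _ _
    nlinarith
  linarith [step1, step2, step3.le, step3.ge]
end
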